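/- Let G be a totally duplicated genome consisting of a single linear chromosome, so that the dedoubled adjacency graph A(G) contains exactly one path and some number C of cycles. Let m be the minimum number of cycles of A(G) that must be merged into the path to make it valid, and let C_i be the maximum size of a subset of non-duplicated pairwise independent cycles of A(G). Then C_i = C − m. -/
import Mathlib


namespace Rearr

/-- A marker occurrence: gene identifier and paralog copy flag. -/
abbrev Occ : Type := ℕ × Bool

/-- An extremity of a marker occurrence (`true` = head, `false` = tail). -/
abbrev Ext : Type := Occ × Bool

/-- The paralogous extremity: other copy, same end. -/
def flipCopy (e : Ext) : Ext := ((e.1.1, !e.1.2), e.2)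

/-- The paralogous opposite extremity: other copy, other end. -/
def coFlip (e : Ext) : Ext := ((e.1.1, !e.1.2), !e.2)

/-- A genome: a finite set of marker occurrences together with a set of
adjacencies, i.e. a partial matching on the extremities of the occurrences.
Unmatched extremities are telomeres; an adjacency is an unordered pair of
extremities, so that the adjacencies `(x y)` and `(−y −x)` are identified. -/
structure Genome where
  occs : Finset Occ
  adj : Finset (Sym2 Ext)

namespace Genome

/-- Well-formedness of a genome: adjacencies only involve extremities of
present occurrences, and every extremity lies in at most one adjacency. -/
def WF (G : Genome) : Prop :=
  (∀ p ∈ G.adj, ∀ e ∈ p, (e : Ext).1 ∈ G.occs) ∧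
  ∀ p ∈ G.adj, ∀ q ∈ G.adj, ∀ e : Ext, e ∈ p → e ∈ q → p = q

def matched (G : Genome) (e : Ext) : Prop := ∃ p ∈ G.adj, e ∈ p

/-- `e` is a telomere of `G`. -/
def telo (G : Genome) (e : Ext) : Prop := e.1 ∈ G.occs ∧ ¬ G.matched e

/-- a non-duplicated genome: no marker is duplicated. -/
def NonDup (G : Genome) : Prop :=
  ∀ g : ℕ, ¬ (((g, true) : Occ) ∈ G.occs ∧ ((g, false) : Occ) ∈ G.occs)

/-- a totally duplicated genome: every marker appears exactly twice. -/
def TotDup (G : Genome) : Prop :=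
  ∀ g : ℕ, ∀ c : Bool, ((g, c) : Occ) ∈ G.occs → ((g, !c) : Occ) ∈ G.occs

/-- the marker `g` is duplicated in `G`. -/
def DupGene (G : Genome) (g : ℕ) : Prop :=
  ((g, true) : Occ) ∈ G.occs ∧ ((g, false) : Occ) ∈ G.occs

/-- number of distinct markers (genes). -/
def numGenes (G : Genome) : ℕ := (G.occs.image Prod.fst).card

/-- A dedoubled genome: each duplicated marker `x` forms a doublet
`(x x̄)` or `(x̄ x)`. -/
def Dedoubled (G : Genome) : Prop :=
  ∀ g : ℕ, G.DupGene g →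
    ∃ c : Bool, s((((g, c), true) : Ext), (((g, !c), false) : Ext)) ∈ G.adj

/-- Two extremities lie in the same chromosome of `G`. -/
def chromRel (G : Genome) (e f : Ext) : Prop :=
  Relation.EqvGen (fun e f => s(e, f) ∈ G.adj ∨ (e.1 = f.1 ∧ e.1 ∈ G.occs)) e f

/-- `G` consists of a single linear chromosome. -/
def Unilinear (G : Genome) : Prop :=
  G.occs.Nonempty ∧ (∀ e f : Ext, e.1 ∈ G.occs → f.1 ∈ G.occs → G.chromRel e f) ∧
  ∃ e : Ext, G.telo e

/-- `G` consists of a single circular chromosome. -/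
def Unicircular (G : Genome) : Prop :=
  G.occs.Nonempty ∧ (∀ e f : Ext, e.1 ∈ G.occs → f.1 ∈ G.occs → G.chromRel e f) ∧
  ∀ e : Ext, ¬ G.telo e

end Genome

/-- A DCJ operation: cut two adjacencies of the genome and rejoin the four
exposed extremities in any possible way (including the degenerate variants
involving telomeres). -/
def IsDCJ (G G' : Genome) : Prop :=
  G.WF ∧ G'.WF ∧ G.occs = G'.occs ∧
  ((∃ a b c d : Ext, s(a, b) ∈ G.adj ∧ s(c, d) ∈ G.adj ∧ s(a, b) ≠ s(c, d) ∧
      (G'.adj = insert s(a, c) (insert s(b, d) ((G.adj.erase s(a, b)).erase s(c, d))) ∨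
       G'.adj = insert s(a, d) (insert s(b, c) ((G.adj.erase s(a, b)).erase s(c, d))))) ∨
   (∃ a b c : Ext, s(a, b) ∈ G.adj ∧ G.telo c ∧
      G'.adj = insert s(a, c) (G.adj.erase s(a, b))) ∨
   (∃ a b : Ext, s(a, b) ∈ G.adj ∧ G'.adj = G.adj.erase s(a, b)) ∨
   (∃ a b : Ext, G.telo a ∧ G.telo b ∧ a ≠ b ∧ G'.adj = insert s(a, b) G.adj))

/-- A reversal: a DCJ that inverts a segment of a chromosome, i.e. a DCJ
preserving the telomeres and the distribution of markers into chromosomes. -/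
def IsReversal (G G' : Genome) : Prop :=
  IsDCJ G G' ∧ (∀ e : Ext, G.matched e ↔ G'.matched e) ∧
  ∀ e f : Ext, G.chromRel e f ↔ G'.chromRel e f

/-- `Scen R ℓ G H`: a scenario of `ℓ` operations of type `R` transforms `G` into `H`. -/
def Scen {α : Type*} (R : α → α → Prop) : ℕ → α → α → Prop
  | 0, G, H => G = H
  | n + 1, G, H => ∃ K, R G K ∧ Scen R n K H

namespace Genome

/-- The natural graph `NG(G)`, as a relation on extremities: two extremities
are related if they lie in the same adjacency (the same vertex of `NG(G)`) or
are the two endpoints of an edge of `NG(G)` (paralogous extremities with the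
same end). -/
def ngRel (G : Genome) (e f : Ext) : Prop :=
  Relation.EqvGen (fun e f => s(e, f) ∈ G.adj ∨
    (f = flipCopy e ∧ e.1 ∈ G.occs ∧ f.1 ∈ G.occs)) e f

/-- a connected component of the natural graph. -/
def IsNGClass (G : Genome) (S : Set Ext) : Prop :=
  ∃ e : Ext, e.1 ∈ G.occs ∧ S = {f | G.ngRel e f}

/-- a cycle of the natural graph: a component without telomere. -/
def IsNGCycle (G : Genome) (S : Set Ext) : Prop :=
  G.IsNGClass S ∧ ∀ e ∈ S, G.matched e

/-- a path of the natural graph: a component containing a telomere. -/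
def IsNGPath (G : Genome) (S : Set Ext) : Prop :=
  G.IsNGClass S ∧ ∃ e ∈ S, ¬ G.matched e

/-- the number of edges of a component of the natural graph. -/
noncomputable def ngEdges (G : Genome) (S : Set Ext) : ℕ :=
  Set.ncard {q : Sym2 Ext | ∃ e : Ext, q = s(e, flipCopy e) ∧
    e.1 ∈ G.occs ∧ (flipCopy e).1 ∈ G.occs ∧ e ∈ S}

/-- the number of cycles of the natural graph. -/
noncomputable def ngCycleCount (G : Genome) : ℕ :=
  Set.ncard {S : Set Ext | G.IsNGCycle S}

/-- the number of even cycles of the natural graph. -/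
noncomputable def ngEvenCycleCount (G : Genome) : ℕ :=
  Set.ncard {S : Set Ext | G.IsNGCycle S ∧ Even (G.ngEdges S)}

/-- the number of odd cycles of the natural graph. -/
noncomputable def ngOddCycleCount (G : Genome) : ℕ :=
  Set.ncard {S : Set Ext | G.IsNGCycle S ∧ Odd (G.ngEdges S)}

/-- the number of even paths of the natural graph. -/
noncomputable def ngEvenPathCount (G : Genome) : ℕ :=
  Set.ncard {S : Set Ext | G.IsNGPath S ∧ Even (G.ngEdges S)}

/-- The dedoubled adjacency graph `A(G)`, as a relation on extremities: two
extremities are related if they lie in the same adjacency (vertex of `A(G)`)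
or are the two endpoints of an edge of `A(G)` (for each marker `x`, one edge
between the head of `x` and the tail of `x̄`). -/
def daRel (G : Genome) (e f : Ext) : Prop :=
  Relation.EqvGen (fun e f => s(e, f) ∈ G.adj ∨
    (f = coFlip e ∧ e.1 ∈ G.occs ∧ f.1 ∈ G.occs)) e f

/-- an element (connected component) of the dedoubled adjacency graph. -/
def IsDAClass (G : Genome) (S : Set Ext) : Prop :=
  ∃ e : Ext, e.1 ∈ G.occs ∧ S = {f | G.daRel e f}

/-- a cycle of the dedoubled adjacency graph. -/
def IsDACycle (G : Genome) (S : Set Ext) : Prop :=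
  G.IsDAClass S ∧ ∀ e ∈ S, G.matched e

/-- a path of the dedoubled adjacency graph. -/
def IsDAPath (G : Genome) (S : Set Ext) : Prop :=
  G.IsDAClass S ∧ ∃ e ∈ S, ¬ G.matched e

end Genome

/-- the element `S` of `A(G)` contains the couple `(x, x̄)` of gene `g`
(it contains one of the two edges associated with `g`). -/
def ElemHasCouple (S : Set Ext) (g : ℕ) : Prop :=
  ∃ c h : Bool, (((g, c), h) : Ext) ∈ S

/-- the element `S` contains the couple of gene `g` twice (both of its edges). -/
def ElemHasCoupleTwice (S : Set Ext) (g : ℕ) : Prop :=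
  ∀ c h : Bool, (((g, c), h) : Ext) ∈ S

/-- a non-duplicated element of `A(G)`. -/
def NonDupElem (S : Set Ext) : Prop := ∀ g : ℕ, ¬ ElemHasCoupleTwice S g

/-- independent elements: no couple is contained in both. -/
def IndepElems (S T : Set Ext) : Prop :=
  ∀ g : ℕ, ¬ (ElemHasCouple S g ∧ ElemHasCouple T g)

/-- a family of pairwise independent non-duplicated cycles of `A(G)`. -/
def IndepCycleFam (G : Genome) (F : Finset (Set Ext)) : Prop :=
  (∀ S ∈ F, G.IsDACycle S ∧ NonDupElem S) ∧
  ∀ S ∈ F, ∀ T ∈ F, S ≠ T → IndepElems S T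

/-- a chromosome of `G`, as the set of extremities it carries. -/
def Genome.IsChrom (G : Genome) (S : Set Ext) : Prop :=
  ∃ e : Ext, e.1 ∈ G.occs ∧ S = {f | G.chromRel e f}

/-- a doubled chromosome: a chromosome globally invariant under the paralogy
map (reducible to `(x x̄)`). -/
def Genome.IsDoubledChrom (G : Genome) (S : Set Ext) : Prop :=
  G.IsChrom S ∧ flipCopy '' S = S

/-- the number of doubled chromosomes of `G`. -/
noncomputable def Genome.doubledCount (G : Genome) : ℕ :=
  Set.ncard {S : Set Ext | G.IsDoubledChrom S}

/-- A perfectly duplicated genome: totally duplicated, every adjacency is a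
double-adjacency, and no adjacency is of the form `(x −x̄)`. -/
def Genome.PerfDup (G : Genome) : Prop :=
  G.TotDup ∧ (∀ p ∈ G.adj, Sym2.map flipCopy p ∈ G.adj) ∧
  ∀ e : Ext, s(e, flipCopy e) ∉ G.adj

/-- `Gc` is obtained from the unilinear genome `G` by circularization:
its two telomeres are joined into an adjacency. -/
def Circularize (G Gc : Genome) : Prop :=
  Gc.occs = G.occs ∧ ∃ e f : Ext, G.telo e ∧ G.telo f ∧ e ≠ f ∧
    Gc.adj = insert s(e, f) G.adj

/-- a signed marker: gene id, paralog copy flag, sign (`true` = positive). -/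
abbrev Mk : Type := ℕ × Bool × Bool

def mOcc (m : Mk) : Occ := (m.1, m.2.1)

/-- right(reading)-facing extremity of a signed marker. -/
def rExt (m : Mk) : Ext := (mOcc m, m.2.2)

/-- left(reading)-facing extremity of a signed marker. -/
def lExt (m : Mk) : Ext := (mOcc m, !m.2.2)

/-- the adjacencies of a linear chromosome given by a list of signed markers. -/
def linAdj : List Mk → Finset (Sym2 Ext)
  | [] => ∅
  | [_] => ∅
  | x :: y :: t => insert s(rExt x, lExt y) (linAdj (y :: t))

def occsOf (l : List Mk) : Finset Occ := (l.map mOcc).toFinset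

/-- the unilinear genome with chromosome `(∘ l ∘)`. -/
def linGenome (l : List Mk) : Genome := ⟨occsOf l, linAdj l⟩

/-- the adjacencies of a circular chromosome given by a list of signed markers. -/
def circAdj (l : List Mk) : Finset (Sym2 Ext) :=
  match l with
  | [] => ∅
  | x :: t => insert s(rExt ((x :: t).getLast (by simp)), lExt x) (linAdj (x :: t))

/-- the unicircular genome obtained by circularizing `(∘ l ∘)`. -/
def circGenome (l : List Mk) : Genome := ⟨occsOf l, circAdj l⟩

/-- the paralogous copy of a signed marker (same gene, same sign, other copy). -/
def copyFlipM (m : Mk) : Mk := (m.1, !m.2.1, m.2.2)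

/-- A 1-tandem duplicated genome: a unilinear genome of the form `(∘ w w̄ ∘)`,
i.e. reducible to `(∘ x x̄ ∘)` by contracting runs of double-adjacencies. -/
def IsTandem (G : Genome) : Prop :=
  ∃ w : List Mk, w ≠ [] ∧ (w.map (fun m => m.1)).Nodup ∧
    G = linGenome (w ++ w.map copyFlipM)

end Rearr

namespace Rearr

open Relation in
lemma daRel_occ_iff (G : Genome) (hwf : G.WF) {e f : Ext} (h : G.daRel e f) :
    e.1 ∈ G.occs ↔ f.1 ∈ G.occs := by
  induction h with
  | rel a b hab =>
    rcases hab with h' | h'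
    · have ha : a ∈ s(a, b) := by simp
      have hb : b ∈ s(a, b) := by simp
      exact ⟨fun _ => hwf.1 _ h' b hb, fun _ => hwf.1 _ h' a ha⟩
    · exact ⟨fun _ => h'.2.2, fun _ => h'.2.1⟩
  | refl a => exact Iff.rfl
  | symm a b _ ih => exact ih.symm
  | trans a b c _ _ ih1 ih2 => exact ih1.trans ih2

open Relation in
lemma class_eq_of_rel (G : Genome) {a b : Ext} (h : G.daRel a b) :
    {f | G.daRel a f} = {f | G.daRel b f} := by
  ext y
  exact ⟨fun hy => EqvGen.trans _ _ _ (EqvGen.symm _ _ h) hy,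
         fun hy => EqvGen.trans _ _ _ h hy⟩

lemma class_eq_of_mem (G : Genome) {S : Set Ext} (hS : G.IsDAClass S) {x : Ext}
    (hx : x ∈ S) : S = {f | G.daRel x f} := by
  obtain ⟨e, _, rfl⟩ := hS
  exact class_eq_of_rel G hx

open Relation in
lemma daRel_coFlip (G : Genome) {g : ℕ} (hg : G.DupGene g) (c h : Bool) :
    G.daRel (((g, c), h) : Ext) (((g, !c), !h) : Ext) :=
  EqvGen.rel _ _ (Or.inr ⟨rfl, by cases c <;> simp [hg.1, hg.2],
    by cases c <;> simp [hg.1, hg.2]⟩)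

lemma couple_class (G : Genome) {g : ℕ} (hg : G.DupGene g)
    {T : Set Ext} (hT : G.IsDAClass T) (hc : ElemHasCouple T g) :
    T = {f | G.daRel (((g, true), true) : Ext) f} ∨
    T = {f | G.daRel (((g, true), false) : Ext) f} := by
  obtain ⟨c, h, hmem⟩ := hc
  have hTc := class_eq_of_mem G hT hmem
  cases c <;> cases h
  · left
    rw [hTc]
    exact (class_eq_of_rel G (daRel_coFlip G hg true true)).symm
  · right
    rw [hTc]
    exact (class_eq_of_rel G (daRel_coFlip G hg true false)).symm
  · right; exact hTc
  · left; exact hTc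

/-- For a unilinear totally duplicated genome `G`, whose dedoubled adjacency
graph `A(G)` contains exactly one path `P` and `C` cycles, with `m` the
minimum number of cycles that must be merged into the path to make it valid
(i.e. so that, together with the path, they contain every couple `(x, x̄)`),
and `C_i` the maximum size of a subset of non-duplicated pairwise independent
cycles: `C_i = C − m`. -/
theorem indep_cycles_eq_cycles_sub_merges (G : Genome) (hwf : G.WF)
    (htd : G.TotDup) (huni : G.Unilinear)
    (P : Set Ext) (hP : G.IsDAPath P) (hPuniq : ∀ Q : Set Ext, G.IsDAPath Q → Q = P)
    (C m Ci : ℕ)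
    (hC : C = Set.ncard {S : Set Ext | G.IsDACycle S})
    (hm : IsLeast {k : ℕ | ∃ F : Finset (Set Ext),
        (∀ S ∈ F, G.IsDACycle S) ∧ F.card = k ∧
        ∀ g : ℕ, G.DupGene g → (ElemHasCouple P g ∨ ∃ S ∈ F, ElemHasCouple S g)} m)
    (hCi : IsGreatest
      {k : ℕ | ∃ F : Finset (Set Ext), IndepCycleFam G F ∧ F.card = k} Ci) :
    Ci = C - m := by
  classical
  -- the set of extremities carried by occurrences is finite
  have hExtFin : ({e : Ext | e.1 ∈ G.occs}).Finite := by
    have hsub : {e : Ext | e.1 ∈ G.occs} ⊆ (↑G.occs : Set Occ) ×ˢ (Set.univ : Set Bool) := by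
      intro e he; exact ⟨he, trivial⟩
    exact Set.Finite.subset ((G.occs.finite_toSet).prod Set.finite_univ) hsub
  -- hence the set of cycles of A(G) is finite
  have hclsfin : {S : Set Ext | G.IsDACycle S}.Finite := by
    apply Set.Finite.subset (hExtFin.image (fun e => {f | G.daRel e f}))
    rintro S ⟨⟨e, he, rfl⟩, -⟩
    exact ⟨e, he, rfl⟩
  set Fcyc : Finset (Set Ext) := hclsfin.toFinset with hFcycdef
  have hmemFcyc : ∀ S : Set Ext, S ∈ Fcyc ↔ G.IsDACycle S := fun S => hclsfin.mem_toFinset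
  have hCcard : C = Fcyc.card := by
    rw [hC, Set.ncard_eq_toFinset_card _ hclsfin]
  -- the path P is not a cycle
  have hPnotcyc : ∀ S : Set Ext, G.IsDACycle S → P ≠ S := by
    intro S hS hPS
    obtain ⟨e, heP, hnm⟩ := hP.2
    exact hnm (hS.2 e (hPS ▸ heP))
  -- every element of A(G) is either the path P or a cycle
  have hclassPC : ∀ S : Set Ext, G.IsDAClass S → S = P ∨ G.IsDACycle S := by
    intro S hS
    by_cases hex : ∃ e ∈ S, ¬ G.matched e
    · exact Or.inl (hPuniq S ⟨hS, hex⟩)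
    · push_neg at hex
      exact Or.inr ⟨hS, hex⟩
  -- members of an element have their occurrence in G
  have hoccOf : ∀ {S : Set Ext}, G.IsDAClass S → ∀ {x : Ext}, x ∈ S → x.1 ∈ G.occs := by
    rintro S ⟨e, he, rfl⟩ x hx
    exact (daRel_occ_iff G hwf hx).1 he
  -- any occurrence of a gene makes it duplicated (total duplication)
  have hdup : ∀ {g : ℕ} {c : Bool}, ((g, c) : Occ) ∈ G.occs → G.DupGene g := by
    intro g c hc
    have h2 := htd g c hc
    cases c
    · exact ⟨by simpa using h2, hc⟩
    · exact ⟨hc, by simpa using h2⟩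
  ------------------------------------------------------------------
  -- Direction A : C - m ≤ Ci
  ------------------------------------------------------------------
  obtain ⟨F, hFcycs, hFcard, hFcover⟩ := hm.1
  have hFsub : F ⊆ Fcyc := fun S hS => (hmemFcyc S).2 (hFcycs S hS)
  have hA : C - m ≤ Ci := by
    apply hCi.2
    refine ⟨Fcyc \ F, ⟨?_, ?_⟩, ?_⟩
    · -- each member is a non-duplicated cycle
      intro S hS
      have hScyc : G.IsDACycle S := (hmemFcyc S).1 (Finset.mem_sdiff.1 hS).1
      refine ⟨hScyc, ?_⟩
      intro g htw
      have hg : G.DupGene g :=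
        ⟨hoccOf hScyc.1 (htw true true), hoccOf hScyc.1 (htw false true)⟩
      rcases hFcover g hg with hPc | ⟨T, hTF, hTc⟩
      · -- the couple lies in P, but P would then equal the cycle S
        obtain ⟨c, h, hpt⟩ := hPc
        have h1 := class_eq_of_mem G hP.1 hpt
        have h2 := class_eq_of_mem G hScyc.1 (htw c h)
        exact hPnotcyc S hScyc (h1.trans h2.symm)
      · -- the couple lies in T ∈ F, but T would then equal S ∉ F
        obtain ⟨c, h, hpt⟩ := hTc
        have h1 := class_eq_of_mem G (hFcycs T hTF).1 hpt
        have h2 := class_eq_of_mem G hScyc.1 (htw c h)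
        have : T = S := h1.trans h2.symm
        exact (Finset.mem_sdiff.1 hS).2 (this ▸ hTF)
    · -- pairwise independence
      intro S hS T hT hne g hgc
      obtain ⟨hcS, hcT⟩ := hgc
      have hScyc : G.IsDACycle S := (hmemFcyc S).1 (Finset.mem_sdiff.1 hS).1
      have hTcyc : G.IsDACycle T := (hmemFcyc T).1 (Finset.mem_sdiff.1 hT).1
      obtain ⟨c, h, hpt⟩ := hcS
      have hg : G.DupGene g := hdup (hoccOf hScyc.1 hpt)
      have hS' := couple_class G hg hScyc.1 ⟨c, h, hpt⟩
      have hT' := couple_class G hg hTcyc.1 hcT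
      rcases hFcover g hg with hPc | ⟨U, hUF, hUc⟩
      · have hP' := couple_class G hg hP.1 hPc
        have : P = S ∨ P = T := by
          rcases hS' with h1 | h1 <;> rcases hT' with h2 | h2 <;>
            rcases hP' with h3 | h3 <;> first
              | (exact Or.inl (h3.trans h1.symm))
              | (exact Or.inr (h3.trans h2.symm))
              | (exact absurd (h1.trans h2.symm) hne)
        rcases this with h' | h'
        · exact hPnotcyc S hScyc h'
        · exact hPnotcyc T hTcyc h'
      · have hU' := couple_class G hg (hFcycs U hUF).1 hUc
        have : U = S ∨ U = T := by
          rcases hS' with h1 | h1 <;> rcases hT' with h2 | h2 <;>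
            rcases hU' with h3 | h3 <;> first
              | (exact Or.inl (h3.trans h1.symm))
              | (exact Or.inr (h3.trans h2.symm))
              | (exact absurd (h1.trans h2.symm) hne)
        rcases this with h' | h'
        · exact (Finset.mem_sdiff.1 hS).2 (h' ▸ hUF)
        · exact (Finset.mem_sdiff.1 hT).2 (h' ▸ hUF)
    · rw [Finset.card_sdiff_of_subset hFsub, hFcard, hCcard]
  ------------------------------------------------------------------
  -- Direction B : m ≤ C - Ci, and Ci ≤ C
  ------------------------------------------------------------------
  obtain ⟨Fi, ⟨hFi1, hFi2⟩, hFicard⟩ := hCi.1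
  have hFisub : Fi ⊆ Fcyc := fun S hS => (hmemFcyc S).2 (hFi1 S hS).1
  have hCiC : Ci ≤ C := by
    rw [hCcard, ← hFicard]
    exact Finset.card_le_card hFisub
  have hB : m ≤ C - Ci := by
    apply hm.2
    refine ⟨Fcyc \ Fi, fun S hS => (hmemFcyc S).1 (Finset.mem_sdiff.1 hS).1, by
      rw [Finset.card_sdiff_of_subset hFisub, hFicard, hCcard], ?_⟩
    intro g hg
    set cls1 : Set Ext := {f | G.daRel (((g, true), true) : Ext) f} with hcls1def
    set cls2 : Set Ext := {f | G.daRel (((g, true), false) : Ext) f} with hcls2def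
    have hc1 : G.IsDAClass cls1 := ⟨_, hg.1, rfl⟩
    have hc2 : G.IsDAClass cls2 := ⟨_, hg.1, rfl⟩
    have hm1 : (((g, true), true) : Ext) ∈ cls1 := Relation.EqvGen.refl _
    have hm2 : (((g, true), false) : Ext) ∈ cls2 := Relation.EqvGen.refl _
    have hcc1 : ElemHasCouple cls1 g := ⟨true, true, hm1⟩
    have hcc2 : ElemHasCouple cls2 g := ⟨true, false, hm2⟩
    rcases hclassPC cls1 hc1 with h1 | h1
    · exact Or.inl (h1 ▸ hcc1)
    rcases hclassPC cls2 hc2 with h2 | h2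
    · exact Or.inl (h2 ▸ hcc2)
    by_cases hin1 : cls1 ∈ Fi
    · by_cases hin2 : cls2 ∈ Fi
      · exfalso
        by_cases heq : cls1 = cls2
        · apply (hFi1 cls1 hin1).2 g
          intro c h
          cases c <;> cases h
          · exact daRel_coFlip G hg true true
          · rw [heq]; exact daRel_coFlip G hg true false
          · rw [heq]; exact hm2
          · exact hm1
        · exact (hFi2 cls1 hin1 cls2 hin2 heq g) ⟨hcc1, hcc2⟩
      · exact Or.inr ⟨cls2, Finset.mem_sdiff.2 ⟨(hmemFcyc _).2 h2, hin2⟩, hcc2⟩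
    · exact Or.inr ⟨cls1, Finset.mem_sdiff.2 ⟨(hmemFcyc _).2 h1, hin1⟩, hcc1⟩
  omega


end Rearr
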